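/- Let F : ℝᴺ → ℝᴺ be any map and E_1, …, E_D : ℝᴺ → ℝᴺ be continuously differentiable maps with ‖E_d(x)‖ ≤ M for all x ∈ ℝᴺ and all d. For a twice continuously differentiable u : ℝᴺ → ℝ define Lu(x) = Du(x)[F(x)] + Σ_{d=1}^{D} D(y ↦ Du(y)[E_d(y)])(x)[E_d(x)]. Assume there exist ν ≥ 1 and λ ∈ ℝ such that L(‖·‖²)(x) ≤ ν + λ‖x‖² for all x ∈ ℝᴺ. Then for every natural number q ≥ 1 there exists a constant C > 0 such that L(‖·‖^{2q})(x) ≤ C(1 + ‖x‖^{2q}) for all x ∈ ℝᴺ. -/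

import Mathlib

open scoped BigOperators
open scoped RealInnerProductSpace

/-- The second-order differential operator in Hörmander form
`Lu(x) = Du(x)[F(x)] + ∑_d D(y ↦ Du(y)[E_d(y)])(x)[E_d(x)]`. -/
noncomputable def Lop {N D : ℕ}
    (F : EuclideanSpace ℝ (Fin N) → EuclideanSpace ℝ (Fin N))
    (E : Fin D → EuclideanSpace ℝ (Fin N) → EuclideanSpace ℝ (Fin N))
    (u : EuclideanSpace ℝ (Fin N) → ℝ) (x : EuclideanSpace ℝ (Fin N)) : ℝ :=
  fderiv ℝ u x (F x) + ∑ d : Fin D, fderiv ℝ (fun y => fderiv ℝ u y (E d y)) x (E d x)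

theorem aux_hpowq {N : ℕ} (q : ℕ) (x : EuclideanSpace ℝ (Fin N)) :
    HasFDerivAt (fun y : EuclideanSpace ℝ (Fin N) => (‖y‖ ^ 2) ^ q)
      ((2 * (q:ℝ) * (‖x‖ ^ 2) ^ (q - 1)) • innerSL ℝ x) x := by
  have h := (hasDerivAt_pow q ((‖x‖:ℝ)^2)).comp_hasFDerivAt x
      (hasStrictFDerivAt_norm_sq x).hasFDerivAt
  refine h.congr_fderiv ?_
  ext v
  simp [mul_comm, mul_assoc, mul_left_comm]

theorem aux_sec {N : ℕ} (q : ℕ) (Ed : EuclideanSpace ℝ (Fin N) → EuclideanSpace ℝ (Fin N))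
    (hEd : ContDiff ℝ 1 Ed) (x : EuclideanSpace ℝ (Fin N)) :
    fderiv ℝ (fun y => fderiv ℝ (fun z : EuclideanSpace ℝ (Fin N) => (‖z‖ ^ 2) ^ q) y (Ed y)) x (Ed x) =
      2 * q * (‖x‖ ^ 2) ^ (q - 1) * (⟪x, fderiv ℝ Ed x (Ed x)⟫ + ⟪Ed x, Ed x⟫)
      + 4 * (q:ℝ) * ((q - 1 : ℕ) : ℝ) * (‖x‖ ^ 2) ^ (q - 2) * ⟪x, Ed x⟫ ^ 2 := by
  have hfun : (fun y => fderiv ℝ (fun z : EuclideanSpace ℝ (Fin N) => (‖z‖ ^ 2) ^ q) y (Ed y))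
      = fun y : EuclideanSpace ℝ (Fin N) => (2 * (q:ℝ) * (‖y‖ ^ 2) ^ (q - 1)) * ⟪y, Ed y⟫ := by
    funext y
    rw [(aux_hpowq q y).fderiv]
    simp
  rw [hfun]
  have h1 : HasFDerivAt (fun y : EuclideanSpace ℝ (Fin N) => 2 * (q:ℝ) * (‖y‖ ^ 2) ^ (q - 1))
      ((2 * (q:ℝ)) • ((2 * ((q-1 : ℕ):ℝ) * (‖x‖ ^ 2) ^ (q - 2)) • innerSL ℝ x)) x := by
    have := (aux_hpowq (q-1) x).const_mul (2 * (q:ℝ))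
    simpa [Nat.sub_sub] using this
  have h2 : HasFDerivAt (fun y : EuclideanSpace ℝ (Fin N) => ⟪y, Ed y⟫)
      ((fderivInnerCLM ℝ (x, Ed x)).comp
        ((ContinuousLinearMap.id ℝ (EuclideanSpace ℝ (Fin N))).prod (fderiv ℝ Ed x))) x :=
    (hasFDerivAt_id x).inner ℝ ((hEd.differentiable one_ne_zero x).hasFDerivAt)
  have h3 : fderiv ℝ (fun y : EuclideanSpace ℝ (Fin N) => 2 * (q:ℝ) * (‖y‖ ^ 2) ^ (q - 1) * ⟪y, Ed y⟫) x = _ :=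
    (h1.mul h2).fderiv
  rw [h3]
  simp only [ContinuousLinearMap.add_apply, ContinuousLinearMap.smul_apply,
    ContinuousLinearMap.comp_apply, ContinuousLinearMap.prod_apply,
    ContinuousLinearMap.coe_id', id_eq, fderivInnerCLM_apply, innerSL_apply_apply, smul_eq_mul]
  rw [real_inner_comm (Ed x) x]
  ring

theorem aux_lop_eval {N D : ℕ}
    (F : EuclideanSpace ℝ (Fin N) → EuclideanSpace ℝ (Fin N))
    (E : Fin D → EuclideanSpace ℝ (Fin N) → EuclideanSpace ℝ (Fin N))
    (hE : ∀ d, ContDiff ℝ 1 (E d)) (q : ℕ) (x : EuclideanSpace ℝ (Fin N)) :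
    Lop F E (fun y => ‖y‖ ^ (2 * q)) x =
      2 * (q:ℝ) * (‖x‖ ^ 2) ^ (q - 1) * ⟪x, F x⟫
      + ∑ d : Fin D,
        (2 * (q:ℝ) * (‖x‖ ^ 2) ^ (q - 1) * (⟪x, fderiv ℝ (E d) x (E d x)⟫ + ⟪E d x, E d x⟫)
         + 4 * (q:ℝ) * ((q - 1 : ℕ) : ℝ) * (‖x‖ ^ 2) ^ (q - 2) * ⟪x, E d x⟫ ^ 2) := by
  have hfn : (fun y : EuclideanSpace ℝ (Fin N) => ‖y‖ ^ (2 * q))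
      = fun y => (‖y‖ ^ 2) ^ q := funext fun y => pow_mul _ _ _
  rw [Lop, hfn, (aux_hpowq q x).fderiv]
  rw [Finset.sum_congr rfl fun d _ => aux_sec q (E d) (hE d) x]
  simp [mul_comm, mul_assoc, mul_left_comm]


set_option maxHeartbeats 1000000 in
theorem stmt4 {N D : ℕ}
    (F : EuclideanSpace ℝ (Fin N) → EuclideanSpace ℝ (Fin N))
    (E : Fin D → EuclideanSpace ℝ (Fin N) → EuclideanSpace ℝ (Fin N))
    (hE : ∀ d, ContDiff ℝ 1 (E d))
    (M : ℝ) (hM : ∀ d x, ‖E d x‖ ≤ M)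
    (ν lam : ℝ) (hν : 1 ≤ ν)
    (hL : ∀ x, Lop F E (fun y => ‖y‖ ^ 2) x ≤ ν + lam * ‖x‖ ^ 2) :
    ∀ q : ℕ, 1 ≤ q → ∃ C > (0 : ℝ), ∀ x,
      Lop F E (fun y => ‖y‖ ^ (2 * q)) x ≤ C * (1 + ‖x‖ ^ (2 * q)) := by
  intro q hq
  have hq1 : (1:ℝ) ≤ (q:ℝ) := by exact_mod_cast hq
  have hCpos : (0:ℝ) < (q:ℝ) * ν + 4 * (q:ℝ)^2 * D * M^2 + (q:ℝ) * |lam| := by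
    have h1 : (1:ℝ) ≤ (q:ℝ) * ν :=
      le_trans (by norm_num) (mul_le_mul hq1 hν zero_le_one (by linarith))
    have h2 : (0:ℝ) ≤ 4 * (q:ℝ)^2 * (D:ℝ) * M^2 := by positivity
    have h3 : (0:ℝ) ≤ (q:ℝ) * |lam| := by positivity
    linarith
  refine ⟨(q:ℝ) * ν + 4 * (q:ℝ)^2 * D * M^2 + (q:ℝ) * |lam|, hCpos, ?_⟩
  intro x
  have hgnn : (0:ℝ) ≤ ‖x‖^2 := by positivity
  set g : ℝ := ‖x‖ ^ 2 with hgdef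
  -- bound on the ∑ ⟪x, E d x⟫² term
  have hSB : ∑ d : Fin D, ⟪x, E d x⟫ ^ 2 ≤ (D : ℝ) * M^2 * g := by
    have key : ∀ d : Fin D, ⟪x, E d x⟫ ^ 2 ≤ M^2 * g := by
      intro d
      have h1 : |⟪x, E d x⟫| ≤ ‖x‖ * ‖E d x‖ := abs_real_inner_le_norm x (E d x)
      have h2 : ‖E d x‖ ≤ M := hM d x
      have h3 : (0:ℝ) ≤ ‖E d x‖ := norm_nonneg _
      have h4 : ⟪x, E d x⟫ ^ 2 ≤ (‖x‖ * ‖E d x‖) ^ 2 := by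
        rw [← sq_abs]
        exact pow_le_pow_left₀ (abs_nonneg _) h1 2
      have h6 : ‖E d x‖ ^ 2 ≤ M ^ 2 := pow_le_pow_left₀ h3 h2 2
      calc ⟪x, E d x⟫ ^ 2 ≤ (‖x‖ * ‖E d x‖) ^ 2 := h4
        _ = ‖E d x‖ ^ 2 * ‖x‖ ^ 2 := by ring
        _ ≤ M ^ 2 * ‖x‖ ^ 2 := mul_le_mul_of_nonneg_right h6 (by positivity)
        _ = M ^ 2 * g := by rw [hgdef]
    calc ∑ d : Fin D, ⟪x, E d x⟫ ^ 2 ≤ ∑ _d : Fin D, M^2 * g :=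
          Finset.sum_le_sum fun d _ => key d
      _ = (D:ℝ) * M^2 * g := by
          rw [Finset.sum_const]
          simp [mul_assoc]
  -- the L(‖·‖²) bound in explicit form
  have hLT : 2 * ⟪x, F x⟫
      + ∑ d : Fin D, 2 * (⟪x, fderiv ℝ (E d) x (E d x)⟫ + ⟪E d x, E d x⟫)
      ≤ ν + lam * g := by
    have e1 : Lop F E (fun y => ‖y‖ ^ 2) x = 2 * ⟪x, F x⟫
        + ∑ d : Fin D, 2 * (⟪x, fderiv ℝ (E d) x (E d x)⟫ + ⟪E d x, E d x⟫) := by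
      have h := aux_lop_eval F E hE 1 x
      norm_num at h
      convert h using 2
      simp [real_inner_self_eq_norm_sq]
    have h2 := hL x
    rw [e1, ← hgdef] at h2
    exact h2
  -- rewrite the target via the evaluation lemma
  rw [aux_lop_eval F E hE q x]
  have hgq : g ^ (q-1) * g = g ^ q := by
    rw [← pow_succ]; congr 1; omega
  have hXnn : (0:ℝ) ≤ g ^ (q-1) := by positivity
  have hYnn : (0:ℝ) ≤ g ^ q := by positivity
  have hpow1 : g ^ (q-1) ≤ 1 + g ^ q := by
    rcases le_or_gt g 1 with h | h
    · have := pow_le_one₀ hgnn h (n := q - 1)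
      linarith
    · have : g ^ (q-1) ≤ g ^ q := pow_le_pow_right₀ h.le (Nat.sub_le q 1)
      linarith
  -- split the sum
  have split : ∑ d : Fin D,
        (2 * (q:ℝ) * g ^ (q - 1) * (⟪x, fderiv ℝ (E d) x (E d x)⟫ + ⟪E d x, E d x⟫)
         + 4 * (q:ℝ) * ((q - 1 : ℕ) : ℝ) * g ^ (q - 2) * ⟪x, E d x⟫ ^ 2)
      = (q:ℝ) * g ^ (q-1) * (∑ d : Fin D, 2 * (⟪x, fderiv ℝ (E d) x (E d x)⟫ + ⟪E d x, E d x⟫))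
        + 4 * (q:ℝ) * ((q - 1 : ℕ) : ℝ) * g ^ (q - 2) * ∑ d : Fin D, ⟪x, E d x⟫ ^ 2 := by
    rw [Finset.sum_add_distrib, Finset.mul_sum, Finset.mul_sum]
    congr 1
    exact Finset.sum_congr rfl fun d _ => by ring
  rw [split]
  -- second order term bound
  have h2bd : 4 * (q:ℝ) * ((q - 1 : ℕ) : ℝ) * g ^ (q - 2) * ∑ d : Fin D, ⟪x, E d x⟫ ^ 2
      ≤ 4 * (q:ℝ)^2 * D * M^2 * g ^ (q-1) := by
    rcases Nat.lt_or_ge q 2 with h | h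
    · interval_cases q
      norm_num
      positivity
    · have hgg : g ^ (q-2) * g = g ^ (q-1) := by
        rw [← pow_succ]; congr 1; omega
      have hq1' : ((q - 1 : ℕ) : ℝ) ≤ (q:ℝ) := by
        have : (q - 1 : ℕ) ≤ q := Nat.sub_le q 1
        exact_mod_cast this
      have hq1nn : (0:ℝ) ≤ ((q - 1 : ℕ) : ℝ) := Nat.cast_nonneg _
      have hcnn : (0:ℝ) ≤ 4 * (q:ℝ) * ((q - 1 : ℕ) : ℝ) * g ^ (q - 2) := by positivity
      calc 4 * (q:ℝ) * ((q - 1 : ℕ) : ℝ) * g ^ (q - 2) * ∑ d : Fin D, ⟪x, E d x⟫ ^ 2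
          ≤ 4 * (q:ℝ) * ((q - 1 : ℕ) : ℝ) * g ^ (q - 2) * ((D : ℝ) * M^2 * g) :=
            mul_le_mul_of_nonneg_left hSB hcnn
        _ = 4 * (q:ℝ) * ((q - 1 : ℕ) : ℝ) * (D:ℝ) * M^2 * (g ^ (q-2) * g) := by ring
        _ = 4 * (q:ℝ) * ((q - 1 : ℕ) : ℝ) * (D:ℝ) * M^2 * g ^ (q-1) := by rw [hgg]
        _ ≤ 4 * (q:ℝ)^2 * D * M^2 * g ^ (q-1) := by
            have hkey := mul_le_mul_of_nonneg_right hq1'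
              (show (0:ℝ) ≤ 4 * (q:ℝ) * ((D:ℝ) * M^2 * g ^ (q-1)) by positivity)
            nlinarith [hkey]
  -- first order + trace term bound
  have h1bd : 2 * (q:ℝ) * g ^ (q - 1) * ⟪x, F x⟫
      + (q:ℝ) * g ^ (q-1) * (∑ d : Fin D, 2 * (⟪x, fderiv ℝ (E d) x (E d x)⟫ + ⟪E d x, E d x⟫))
      ≤ (q:ℝ) * g ^ (q-1) * (ν + lam * g) := by
    have hc : (0:ℝ) ≤ (q:ℝ) * g ^ (q-1) := by positivity
    have hmul := mul_le_mul_of_nonneg_left hLT hc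
    calc 2 * (q:ℝ) * g ^ (q - 1) * ⟪x, F x⟫
        + (q:ℝ) * g ^ (q-1) * (∑ d : Fin D, 2 * (⟪x, fderiv ℝ (E d) x (E d x)⟫ + ⟪E d x, E d x⟫))
        = (q:ℝ) * g ^ (q-1) * (2 * ⟪x, F x⟫
          + ∑ d : Fin D, 2 * (⟪x, fderiv ℝ (E d) x (E d x)⟫ + ⟪E d x, E d x⟫)) := by ring
      _ ≤ (q:ℝ) * g ^ (q-1) * (ν + lam * g) := hmul
  -- conclude
  have hfinal : (q:ℝ) * g ^ (q-1) * (ν + lam * g) + 4 * (q:ℝ)^2 * D * M^2 * g ^ (q-1)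
      ≤ ((q:ℝ) * ν + 4 * (q:ℝ)^2 * D * M^2 + (q:ℝ) * |lam|) * (1 + g ^ q) := by
    have expand : (q:ℝ) * g ^ (q-1) * (ν + lam * g)
        = (q:ℝ) * ν * g ^ (q-1) + (q:ℝ) * lam * (g ^ (q-1) * g) := by ring
    rw [expand, hgq]
    have a1 : (q:ℝ) * ν * g ^ (q-1) ≤ (q:ℝ) * ν * (1 + g ^ q) :=
      mul_le_mul_of_nonneg_left hpow1 (by nlinarith)
    have a2 : 4 * (q:ℝ)^2 * D * M^2 * g ^ (q-1) ≤ 4 * (q:ℝ)^2 * D * M^2 * (1 + g ^ q) :=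
      mul_le_mul_of_nonneg_left hpow1 (by positivity)
    have a3 : (q:ℝ) * lam * g ^ q ≤ (q:ℝ) * |lam| * (1 + g ^ q) := by
      have h1 : lam * g ^ q ≤ |lam| * g ^ q :=
        mul_le_mul_of_nonneg_right (le_abs_self lam) hYnn
      have h2 : |lam| * g ^ q ≤ |lam| * (1 + g ^ q) := by
        have := abs_nonneg lam; nlinarith
      nlinarith [mul_le_mul_of_nonneg_left (h1.trans h2) (le_trans zero_le_one hq1)]
    linarith [a1, a2, a3]
  have hxg : ‖x‖ ^ (2 * q) = g ^ q := by rw [hgdef, ← pow_mul]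
  rw [hxg]
  linarith [h1bd, h2bd, hfinal]
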